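/- arXiv:2509.18389 — 7 statements merged into one kernel-verified Lean document; each statement's English description precedes it below -/
import Mathlib

section
/- For every L ≥ 0 and every query index j ∈ {1,…,n}, the L-layer Transformer output with the TD parameters on the enumerated prompt equals the j-th entry of the L-th TD iterate: TF_L(Z_0(j); θ_L^TD) = ⟨e_j, w_L⟩. -/
open Matrix Filter Topology

noncomputable section

/-- Index type for `2n` rows (two stacked copies of the feature dimension). -/
abbrev TwoN (n : ℕ) := Fin n ⊕ Fin n
/-- Row index type for prompts: `2n + 1`. -/
abbrev RIdx (n : ℕ) := TwoN n ⊕ Unit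
/-- Column index type for prompts: `n + 1` (context columns plus the query column). -/
abbrev CIdx (n : ℕ) := Fin n ⊕ Unit

/-- The mask `M = [[I_n, 0],[0, 0]]`. -/
def maskM (n : ℕ) : Matrix (CIdx n) (CIdx n) ℝ := Matrix.fromBlocks 1 0 0 0

/-- One linear attention layer `Z ↦ Z + P̃ Z M (Zᵀ Q̃ Z)`. -/
def attnLayer (n : ℕ) (Pm Qm : Matrix (RIdx n) (RIdx n) ℝ)
    (Z : Matrix (RIdx n) (CIdx n) ℝ) : Matrix (RIdx n) (CIdx n) ℝ :=
  Z + Pm * Z * maskM n * (Zᵀ * Qm * Z)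

/-- `P̃ = [[0, 0],[u, 1]]`. -/
def Pmat (n : ℕ) (u : Matrix Unit (TwoN n) ℝ) : Matrix (RIdx n) (RIdx n) ℝ :=
  Matrix.fromBlocks 0 0 u 1

/-- `Q̃ = [[A, 0],[0, 0]]`. -/
def Qmat (n : ℕ) (A : Matrix (TwoN n) (TwoN n) ℝ) : Matrix (RIdx n) (RIdx n) ℝ :=
  Matrix.fromBlocks A 0 0 0

/-- `A^TD = [[-I, I],[0, 0]]`. -/
def Atd (n : ℕ) : Matrix (TwoN n) (TwoN n) ℝ := Matrix.fromBlocks (-1) 1 0 0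

/-- A row-stochastic matrix. -/
def RowStochastic {n : ℕ} (P : Matrix (Fin n) (Fin n) ℝ) : Prop :=
  (∀ i k, 0 ≤ P i k) ∧ ∀ i, ∑ k, P i k = 1

/-- TD iterates `w_0 = 0`, `w_{l+1} = r + γ P w_l`. -/
def tdW {n : ℕ} (γ : ℝ) (P : Matrix (Fin n) (Fin n) ℝ) (r : Fin n → ℝ) : ℕ → Fin n → ℝ
  | 0 => 0
  | l + 1 => r + γ • P.mulVec (tdW γ P r l)

/-- The value vector `v = (I - γ P)⁻¹ r`. -/
def valueV {n : ℕ} (γ : ℝ) (P : Matrix (Fin n) (Fin n) ℝ) (r : Fin n → ℝ) : Fin n → ℝ :=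
  ((1 : Matrix (Fin n) (Fin n) ℝ) - γ • P)⁻¹.mulVec r

/-- The prompt `Z_0(j)`: the `i`-th column is `(e_i, γ Pᵀ e_i, r_i)` and the query
column is `(e_j, 0, 0)`. -/
def prompt {n : ℕ} (γ : ℝ) (P : Matrix (Fin n) (Fin n) ℝ) (r : Fin n → ℝ) (j : Fin n) :
    Matrix (RIdx n) (CIdx n) ℝ := fun p q =>
  match p, q with
  | Sum.inl (Sum.inl k), Sum.inl i => if k = i then 1 else 0
  | Sum.inl (Sum.inr k), Sum.inl i => γ * P i k
  | Sum.inr _, Sum.inl i => r i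
  | Sum.inl (Sum.inl k), Sum.inr _ => if k = j then 1 else 0
  | Sum.inl (Sum.inr _), Sum.inr _ => 0
  | Sum.inr _, Sum.inr _ => 0

/-- Embeddings `Z_l` of the looped transformer with shared parameters `(A, u)`,
starting from the prompt `Z_0(j)`. -/
def embed {n : ℕ} (γ : ℝ) (P : Matrix (Fin n) (Fin n) ℝ) (r : Fin n → ℝ) (j : Fin n)
    (A : Matrix (TwoN n) (TwoN n) ℝ) (u : Matrix Unit (TwoN n) ℝ) :
    ℕ → Matrix (RIdx n) (CIdx n) ℝ
  | 0 => prompt γ P r j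
  | l + 1 => attnLayer n (Pmat n u) (Qmat n A) (embed γ P r j A u l)

/-- Looped `L`-layer transformer output `F_L^{(j)}(A, u) = -(Z_L)_{2n+1, n+1}`. -/
def tfOut {n : ℕ} (γ : ℝ) (P : Matrix (Fin n) (Fin n) ℝ) (r : Fin n → ℝ) (j : Fin n)
    (A : Matrix (TwoN n) (TwoN n) ℝ) (u : Matrix Unit (TwoN n) ℝ) (L : ℕ) : ℝ :=
  -(embed γ P r j A u L (Sum.inr ()) (Sum.inr ()))

/-- `TF_L(Z_0(j); θ_L^TD)`: the transformer output with the TD parameters. -/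
def tfTD {n : ℕ} (γ : ℝ) (P : Matrix (Fin n) (Fin n) ℝ) (r : Fin n → ℝ) (j : Fin n) (L : ℕ) : ℝ :=
  tfOut γ P r j (Atd n) 0 L

/-- `X ∈ ℝ^{2n×n}`: the `i`-th column is `(e_i, γ Pᵀ e_i)`. -/
def Xmat {n : ℕ} (γ : ℝ) (P : Matrix (Fin n) (Fin n) ℝ) : Matrix (TwoN n) (Fin n) ℝ :=
  fun p i => match p with
  | Sum.inl k => if k = i then 1 else 0
  | Sum.inr k => γ * P i k

/-- The query vector `x^q = (e_ω, 0) ∈ ℝ^{2n}`. -/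
def xqv {n : ℕ} (ω : Fin n) : TwoN n → ℝ := fun p =>
  match p with
  | Sum.inl k => if k = ω then 1 else 0
  | Sum.inr _ => 0

/-- Operator norm induced by the ℓ1 vector norm: maximum absolute column sum. -/
def matL1 {m k : Type*} [Fintype m] [Fintype k] (B : Matrix m k ℝ) : ℝ :=
  ⨆ j, ∑ i, |B i j|

/-- `G_0^{(i)} = 0`, `G_{l+1}^{(i)} = X (r - w_l) (X e_i)ᵀ + γ Σ_j P_{ij} G_l^{(j)}`. -/
def Gseq {n : ℕ} (γ : ℝ) (P : Matrix (Fin n) (Fin n) ℝ) (r : Fin n → ℝ) :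
    ℕ → Fin n → Matrix (TwoN n) (TwoN n) ℝ
  | 0 => fun _ => 0
  | l + 1 => fun i =>
      Matrix.vecMulVec ((Xmat γ P).mulVec (r - tdW γ P r l)) ((Xmat γ P).mulVec (Pi.single i 1))
        + γ • ∑ j, P i j • Gseq γ P r l j

/-- `H_0 = 0`, `H_{l+1} = H_l + X (r - w_l) (x^q)ᵀ - G_l^{(ω)}`. -/
def Hseq {n : ℕ} (γ : ℝ) (P : Matrix (Fin n) (Fin n) ℝ) (r : Fin n → ℝ) (ω : Fin n) :
    ℕ → Matrix (TwoN n) (TwoN n) ℝ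
  | 0 => 0
  | l + 1 => Hseq γ P r ω l
      + Matrix.vecMulVec ((Xmat γ P).mulVec (r - tdW γ P r l)) (xqv ω)
      - Gseq γ P r l ω

/-- `U_0 = 0`, `U_{l+1} = X Xᵀ A^TD X + γ U_l Pᵀ`. -/
def Useq {n : ℕ} (γ : ℝ) (P : Matrix (Fin n) (Fin n) ℝ) : ℕ → Matrix (TwoN n) (Fin n) ℝ
  | 0 => 0
  | l + 1 => Xmat γ P * (Xmat γ P)ᵀ * Atd n * Xmat γ P + γ • (Useq γ P l * Pᵀ)

/-- `h_0 = 0`, `h_{l+1} = h_l + X Xᵀ A^TD x^q + U_l Xᵀ A^TD x^q`. -/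
def hseq {n : ℕ} (γ : ℝ) (P : Matrix (Fin n) (Fin n) ℝ) (ω : Fin n) : ℕ → TwoN n → ℝ
  | 0 => 0
  | l + 1 => hseq γ P ω l
      + (Xmat γ P * (Xmat γ P)ᵀ * Atd n).mulVec (xqv ω)
      + (Useq γ P l * (Xmat γ P)ᵀ * Atd n).mulVec (xqv ω)

/-- `g_L(j)`: the vector of all partial derivatives of `F_L^{(j)}` with respect to the
entries of `A` and of `u`, evaluated at the TD parameters `(A^TD, 0)`. -/
def gvec {n : ℕ} (γ : ℝ) (P : Matrix (Fin n) (Fin n) ℝ) (r : Fin n → ℝ) (L : ℕ) (j : Fin n) :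
    (TwoN n × TwoN n) ⊕ TwoN n → ℝ
  | Sum.inl ab => deriv (fun t : ℝ =>
      tfOut γ P r j (Atd n + t • Matrix.single ab.1 ab.2 1) 0 L) 0
  | Sum.inr k => deriv (fun t : ℝ =>
      tfOut γ P r j (Atd n) (t • Matrix.single () k 1) L) 0


namespace Stmt1Aux

variable {n : ℕ}

/-- The query column as a `2n × 1` matrix. -/
def xqm (j : Fin n) : Matrix (TwoN n) Unit ℝ := fun p _ => xqv j p

/-- A vector as a `1 × n` row matrix. -/
def rowv (b : Fin n → ℝ) : Matrix Unit (Fin n) ℝ := fun _ i => b i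

/-- `b_l = (γP)^l r`. -/
def bvec (γ : ℝ) (P : Matrix (Fin n) (Fin n) ℝ) (r : Fin n → ℝ) (l : ℕ) : Fin n → ℝ :=
  ((γ • P) ^ l).mulVec r

lemma bvec_zero (γ : ℝ) (P : Matrix (Fin n) (Fin n) ℝ) (r : Fin n → ℝ) :
    bvec γ P r 0 = r := by
  simp [bvec]

lemma bvec_succ (γ : ℝ) (P : Matrix (Fin n) (Fin n) ℝ) (r : Fin n → ℝ) (l : ℕ) :
    bvec γ P r (l + 1) = γ • P.mulVec (bvec γ P r l) := by
  rw [bvec, pow_succ', ← Matrix.mulVec_mulVec, Matrix.smul_mulVec]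
  rfl

lemma tdW_succ_eq (γ : ℝ) (P : Matrix (Fin n) (Fin n) ℝ) (r : Fin n → ℝ) (l : ℕ) :
    tdW γ P r (l + 1) = tdW γ P r l + bvec γ P r l := by
  induction l with
  | zero => simp [tdW, bvec_zero]
  | succ l ih =>
      have : tdW γ P r (l + 2) = r + γ • P.mulVec (tdW γ P r (l + 1)) := rfl
      rw [this, bvec_succ, ih, Matrix.mulVec_add, smul_add, ← ih,
        show tdW γ P r (l + 1) = r + γ • P.mulVec (tdW γ P r l) from rfl]
      abel

/-- The prompt as a block matrix. -/
lemma prompt_eq (γ : ℝ) (P : Matrix (Fin n) (Fin n) ℝ) (r : Fin n → ℝ) (j : Fin n) :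
    prompt γ P r j = Matrix.fromBlocks (Xmat γ P) (xqm j) (rowv r) 0 := by
  ext p q
  cases p with
  | inl p =>
      cases p <;> cases q <;>
        simp [prompt, Xmat, xqm, xqv, rowv, Matrix.fromBlocks]
  | inr p =>
      cases q <;> simp [prompt, rowv, Matrix.fromBlocks]

/-- One attention layer with TD-shape parameters, on a block matrix. -/
lemma attn_block (A : Matrix (TwoN n) (TwoN n) ℝ) (X : Matrix (TwoN n) (Fin n) ℝ)
    (xq : Matrix (TwoN n) Unit ℝ) (b : Matrix Unit (Fin n) ℝ) (c : Matrix Unit Unit ℝ) :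
    attnLayer n (Pmat n 0) (Qmat n A) (Matrix.fromBlocks X xq b c)
      = Matrix.fromBlocks X xq (b + b * (Xᵀ * A * X)) (c + b * (Xᵀ * A * xq)) := by
  unfold attnLayer Pmat Qmat maskM
  rw [Matrix.fromBlocks_transpose]
  simp only [Matrix.fromBlocks_multiply, Matrix.zero_mul, Matrix.mul_zero, Matrix.mul_one,
    Matrix.one_mul, zero_add, add_zero, Matrix.fromBlocks_add]


lemma XAX (γ : ℝ) (P : Matrix (Fin n) (Fin n) ℝ) :
    (Xmat γ P)ᵀ * Atd n * Xmat γ P = γ • Pᵀ - 1 := by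
  ext m i
  simp only [Matrix.mul_apply, Matrix.transpose_apply, Fintype.sum_sum_type, Atd,
    Matrix.fromBlocks_apply₁₁, Matrix.fromBlocks_apply₁₂, Matrix.fromBlocks_apply₂₁,
    Matrix.fromBlocks_apply₂₂, Xmat]
  simp [Matrix.one_apply, Finset.mul_sum, Finset.sum_ite_eq, Finset.sum_ite_eq',
    mul_comm, eq_comm, sub_eq_add_neg]
  rcases eq_or_ne m i with h | h <;> simp [h, eq_comm] <;> ring

lemma XAxq (γ : ℝ) (P : Matrix (Fin n) (Fin n) ℝ) (j : Fin n) :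
    (Xmat γ P)ᵀ * Atd n * xqm j = (rowv (fun i => if i = j then (-1 : ℝ) else 0))ᵀ := by
  ext m u
  simp only [Matrix.mul_apply, Matrix.transpose_apply, Fintype.sum_sum_type, Atd,
    Matrix.fromBlocks_apply₁₁, Matrix.fromBlocks_apply₁₂, Matrix.fromBlocks_apply₂₁,
    Matrix.fromBlocks_apply₂₂, Xmat, xqm, xqv, rowv]
  rcases eq_or_ne m j with h | h <;> simp [h, rowv, Finset.sum_ite_eq, Finset.sum_ite_eq', eq_comm]

/-- The embedding at layer `l` with TD parameters, in closed form. -/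
lemma embed_eq (γ : ℝ) (P : Matrix (Fin n) (Fin n) ℝ) (r : Fin n → ℝ) (j : Fin n) (l : ℕ) :
    embed γ P r j (Atd n) 0 l
      = Matrix.fromBlocks (Xmat γ P) (xqm j) (rowv (bvec γ P r l))
          (Matrix.of fun _ _ => -(tdW γ P r l j)) := by
  induction l with
  | zero =>
      show prompt γ P r j = _
      rw [prompt_eq, bvec_zero]
      have h0 : (Matrix.of fun _ _ => -(tdW γ P r 0 j) : Matrix Unit Unit ℝ) = 0 := by
        funext u u'
        show -(tdW γ P r 0 j) = 0
        simp [tdW]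
      rw [h0]
  | succ l ih =>
      show attnLayer n (Pmat n 0) (Qmat n (Atd n)) (embed γ P r j (Atd n) 0 l) = _
      rw [ih, attn_block, XAX, XAxq]
      have hb : rowv (bvec γ P r l) + rowv (bvec γ P r l) * (γ • Pᵀ - 1)
          = rowv (bvec γ P r (l + 1)) := by
        ext u i
        rw [bvec_succ]
        simp only [Matrix.add_apply, Matrix.mul_apply, rowv, Matrix.sub_apply,
          Matrix.smul_apply, Matrix.transpose_apply, Matrix.one_apply, smul_eq_mul,
          Pi.smul_apply, Matrix.mulVec, dotProduct, mul_sub, mul_ite, mul_one,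
          mul_zero, Finset.sum_sub_distrib, Finset.sum_ite_eq', Finset.mem_univ, if_true,
          Finset.mul_sum]
        have h2 : ∑ m, bvec γ P r l m * (γ * P i m) = ∑ m, γ * (P i m * bvec γ P r l m) :=
          Finset.sum_congr rfl fun m _ => by ring
        rw [h2]
        ring
      rw [hb]
      ext p q
      rcases p with p | u <;> rcases q with i | u'
      · rfl
      · rfl
      · rfl
      · simp only [Matrix.fromBlocks_apply₂₂, Matrix.add_apply, Matrix.mul_apply, rowv, Matrix.of_apply,
          Matrix.transpose_apply, mul_ite, mul_neg_one, mul_zero, Finset.sum_ite_eq',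
          Finset.mem_univ, if_true]
        rw [tdW_succ_eq, Pi.add_apply]
        ring

end Stmt1Aux

/-- the L-layer transformer output with TD parameters equals the
j-th entry of the L-th TD iterate. -/
theorem stmt1 (n : ℕ) (hn : 1 ≤ n) (γ : ℝ) (hγ0 : 0 ≤ γ) (hγ1 : γ < 1)
    (P : Matrix (Fin n) (Fin n) ℝ) (hP : RowStochastic P) (r : Fin n → ℝ)
    (L : ℕ) (j : Fin n) :
    tfTD γ P r j L = tdW γ P r L j := by
  unfold tfTD tfOut
  rw [Stmt1Aux.embed_eq]
  simp [Matrix.fromBlocks_apply₂₂]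

end
end

section
/- (Theorem 1, inference-time convergence) For every query index j ∈ {1,…,n}, the depth-L Transformer output with the TD parameters converges to the true value of the query state: lim_{L→∞} TF_L(Z_0(j); θ_L^TD) = v_j, the j-th entry of the value vector v = (I_n − γP)^{-1} r. -/
open Matrix Filter Topology

noncomputable section

-- ============ auxiliary definitions ============

/-- Top-left block of the prompt: columns `(e_i, γ Pᵀ e_i)`. -/
def Xb {n : ℕ} (γ : ℝ) (P : Matrix (Fin n) (Fin n) ℝ) : Matrix (TwoN n) (Fin n) ℝ :=
  Matrix.fromRows 1 (γ • Pᵀ)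

/-- Upper half of the query column. -/
def E1 {n : ℕ} (j : Fin n) : Matrix (Fin n) Unit ℝ :=
  Matrix.of fun k _ => if k = j then 1 else 0

def Eb {n : ℕ} (j : Fin n) : Matrix (TwoN n) Unit ℝ := Matrix.fromRows (E1 j) 0

lemma XbT_Atd_Xb {n : ℕ} (γ : ℝ) (P : Matrix (Fin n) (Fin n) ℝ) :
    (Xb γ P)ᵀ * Atd n * Xb γ P = γ • Pᵀ - 1 := by
  rw [Xb, Atd, Matrix.transpose_fromRows]
  rw [Matrix.mul_assoc, Matrix.fromBlocks_mul_fromRows, Matrix.fromCols_mul_fromRows]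
  simp [Matrix.transpose_smul, Matrix.transpose_transpose, Matrix.neg_mul, sub_eq_neg_add]

lemma XbT_Atd_Eb {n : ℕ} (γ : ℝ) (P : Matrix (Fin n) (Fin n) ℝ) (j : Fin n) :
    (Xb γ P)ᵀ * Atd n * Eb j = -(E1 j) := by
  rw [Xb, Atd, Eb, Matrix.transpose_fromRows]
  rw [Matrix.mul_assoc, Matrix.fromBlocks_mul_fromRows, Matrix.fromCols_mul_fromRows]
  simp

/-- One attention step on a block-structured embedding. -/
lemma attn_step {n : ℕ} (γ : ℝ) (P : Matrix (Fin n) (Fin n) ℝ) (j : Fin n)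
    (b : Matrix Unit (Fin n) ℝ) (c : Matrix Unit Unit ℝ) :
    attnLayer n (Pmat n 0) (Qmat n (Atd n)) (Matrix.fromBlocks (Xb γ P) (Eb j) b c)
      = Matrix.fromBlocks (Xb γ P) (Eb j) (b * (γ • Pᵀ)) (c - b * E1 j) := by
  rw [attnLayer, Pmat, Qmat, maskM, Matrix.fromBlocks_transpose]
  rw [Matrix.fromBlocks_multiply, Matrix.fromBlocks_multiply, Matrix.fromBlocks_multiply,
    Matrix.fromBlocks_multiply, Matrix.fromBlocks_multiply]
  simp only [Matrix.zero_mul, Matrix.mul_zero, Matrix.mul_one, Matrix.one_mul,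
    add_zero, zero_add, Matrix.fromBlocks_add]
  have h1 : b * ((Xb γ P)ᵀ * Atd n * Xb γ P) = b * (γ • Pᵀ) - b := by
    rw [XbT_Atd_Xb, Matrix.mul_sub, Matrix.mul_one]
  have h2 : b * ((Xb γ P)ᵀ * Atd n * Eb j) = -(b * E1 j) := by
    rw [XbT_Atd_Eb, Matrix.mul_neg]
  have e1 : b + (b * (γ • Pᵀ) - b) = b * (γ • Pᵀ) := by abel
  simp only [Matrix.mul_assoc] at h1 h2 ⊢
  rw [h1, h2, e1, sub_eq_add_neg]

lemma prompt_blocks {n : ℕ} (γ : ℝ) (P : Matrix (Fin n) (Fin n) ℝ) (r : Fin n → ℝ) (j : Fin n) :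
    prompt γ P r j = Matrix.fromBlocks (Xb γ P) (Eb j) (Matrix.of fun _ i => r i) 0 := by
  ext p q
  rcases p with (k | k) | u <;> rcases q with i | u' <;>
    simp [prompt, Xb, Eb, E1, Matrix.fromRows_apply_inl, Matrix.fromRows_apply_inr, Matrix.one_apply, mul_comm]

lemma tdW_succ {n : ℕ} (γ : ℝ) (P : Matrix (Fin n) (Fin n) ℝ) (r : Fin n → ℝ) :
    ∀ L, tdW γ P r (L + 1) = tdW γ P r L + ((γ • P) ^ L).mulVec r := by
  intro L
  induction L with
  | zero => simp [tdW, Matrix.mulVec_zero]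
  | succ L ih =>
    have key : γ • P.mulVec (((γ • P) ^ L).mulVec r) = ((γ • P) ^ (L + 1)).mulVec r := by
      rw [pow_succ', ← Matrix.mulVec_mulVec, Matrix.smul_mulVec]
    calc tdW γ P r (L + 2) = r + γ • P.mulVec (tdW γ P r (L + 1)) := rfl
      _ = r + γ • P.mulVec (tdW γ P r L + ((γ • P) ^ L).mulVec r) := by rw [ih]
      _ = (r + γ • P.mulVec (tdW γ P r L)) + γ • P.mulVec (((γ • P) ^ L).mulVec r) := by
          rw [Matrix.mulVec_add, smul_add]; abel
      _ = tdW γ P r (L + 1) + ((γ • P) ^ (L + 1)).mulVec r := by rw [key]; rfl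

lemma embed_eq {n : ℕ} (γ : ℝ) (P : Matrix (Fin n) (Fin n) ℝ) (r : Fin n → ℝ) (j : Fin n) :
    ∀ L, embed γ P r j (Atd n) 0 L
      = Matrix.fromBlocks (Xb γ P) (Eb j)
          (Matrix.of fun _ i => ((γ • P) ^ L).mulVec r i)
          (Matrix.of fun _ _ => -(tdW γ P r L j)) := by
  intro L
  induction L with
  | zero =>
    have hb : (Matrix.of fun (_ : Unit) i => ((γ • P) ^ 0).mulVec r i)
        = (Matrix.of fun (_ : Unit) i => r i) := by
      ext u i; simp [Matrix.one_mulVec]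
    have hc : (Matrix.of fun (_ : Unit) (_ : Unit) => -(tdW γ P r 0 j))
        = (0 : Matrix Unit Unit ℝ) := by
      ext u u'; simp [tdW]
    rw [show embed γ P r j (Atd n) 0 0 = prompt γ P r j from rfl, prompt_blocks, hb, hc]
  | succ L ih =>
    have hb : (Matrix.of fun (_ : Unit) i => ((γ • P) ^ L).mulVec r i) * (γ • Pᵀ)
        = Matrix.of fun (_ : Unit) i => ((γ • P) ^ (L + 1)).mulVec r i := by
      ext u i
      have hRHS : ((γ • P) ^ (L + 1)).mulVec r i
          = γ * ∑ k, P i k * ((γ • P) ^ L).mulVec r k := by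
        rw [pow_succ', ← Matrix.mulVec_mulVec, Matrix.smul_mulVec, Pi.smul_apply,
          smul_eq_mul]
        rfl
      simp only [Matrix.mul_apply, Matrix.of_apply, Matrix.smul_apply,
        Matrix.transpose_apply, smul_eq_mul, hRHS, Finset.mul_sum]
      exact Finset.sum_congr rfl fun k _ => by ring
    have hc : (Matrix.of fun (_ : Unit) (_ : Unit) => -(tdW γ P r L j))
          - (Matrix.of fun (_ : Unit) i => ((γ • P) ^ L).mulVec r i) * E1 j
        = Matrix.of fun (_ : Unit) (_ : Unit) => -(tdW γ P r (L + 1) j) := by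
      ext u u'
      simp only [Matrix.sub_apply, Matrix.of_apply, Matrix.mul_apply, E1,
        mul_ite, mul_one, mul_zero, Finset.sum_ite_eq', Finset.mem_univ, if_true]
      rw [tdW_succ]
      simp only [Pi.add_apply]
      ring
    rw [show embed γ P r j (Atd n) 0 (L + 1)
        = attnLayer n (Pmat n 0) (Qmat n (Atd n)) (embed γ P r j (Atd n) 0 L) from rfl,
      ih, attn_step, hb, hc]

lemma tfTD_eq_tdW {n : ℕ} (γ : ℝ) (P : Matrix (Fin n) (Fin n) ℝ) (r : Fin n → ℝ) (j : Fin n)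
    (L : ℕ) : tfTD γ P r j L = tdW γ P r L j := by
  rw [tfTD, tfOut, embed_eq]
  simp [Matrix.fromBlocks]

-- ============ convergence of TD iterates ============

attribute [local instance] Matrix.linftyOpNormedRing Matrix.linftyOpNormedAlgebra
attribute [local instance] Matrix.linfty_opNormOneClass

/-- Theorem 1: inference-time convergence of the depth-L transformer
output with TD parameters to the true value of the query state. -/
theorem stmt3 (n : ℕ) (hn : 1 ≤ n) (γ : ℝ) (hγ0 : 0 ≤ γ) (hγ1 : γ < 1)
    (P : Matrix (Fin n) (Fin n) ℝ) (hP : RowStochastic P) (r : Fin n → ℝ)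
    (j : Fin n) :
    Tendsto (fun L : ℕ => tfTD γ P r j L) atTop (𝓝 (valueV γ P r j)) := by
  have : Nonempty (Fin n) := ⟨⟨0, hn⟩⟩
  set x : Matrix (Fin n) (Fin n) ℝ := γ • P with hx
  -- norm bound
  have hnormP : ‖P‖ ≤ 1 := by
    rw [Matrix.linfty_opNorm_def]
    have : ∀ i : Fin n, (∑ k, ‖P i k‖₊) = 1 := by
      intro i
      have := hP.2 i
      apply NNReal.coe_injective
      push_cast
      simpa [Real.norm_eq_abs, abs_of_nonneg (hP.1 i _)] using this
    have : (Finset.univ.sup fun i : Fin n => ∑ k, ‖P i k‖₊) ≤ 1 := by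
      apply Finset.sup_le; intro i _; rw [this i]
    exact_mod_cast this
  have hxn : ‖x‖ ≤ γ := by
    rw [hx, norm_smul, Real.norm_eq_abs, abs_of_nonneg hγ0]
    calc γ * ‖P‖ ≤ γ * 1 := by nlinarith [norm_nonneg P]
    _ = γ := mul_one γ
  have hx1 : ‖x‖ < 1 := lt_of_le_of_lt hxn hγ1
  have hUnit : IsUnit ((1 : Matrix (Fin n) (Fin n) ℝ) - x) := isUnit_one_sub_of_norm_lt_one hx1
  set v : Fin n → ℝ := valueV γ P r with hv
  -- v = r + x *ᵥ v
  have hfix : ((1 : Matrix (Fin n) (Fin n) ℝ) - x) *ᵥ v = r := by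
    rw [hv, valueV, Matrix.mulVec_mulVec, Matrix.mul_nonsing_inv _
      ((Matrix.isUnit_iff_isUnit_det _).mp hUnit), Matrix.one_mulVec]
  have hvfix : r + x *ᵥ v = v := by
    have := hfix
    rw [Matrix.sub_mulVec, Matrix.one_mulVec] at this
    have : v - x *ᵥ v = r := this
    rw [← this]; abel
  -- tdW L = v - x^L *ᵥ v
  have htd : ∀ L, tdW γ P r L = v - (x ^ L) *ᵥ v := by
    intro L
    induction L with
    | zero => simp [tdW, Matrix.one_mulVec]
    | succ L ih =>
      show r + γ • P.mulVec (tdW γ P r L) = _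
      rw [ih]
      rw [show γ • P.mulVec (v - x ^ L *ᵥ v) = x *ᵥ (v - x ^ L *ᵥ v) from
        (Matrix.smul_mulVec γ P _).symm]
      rw [Matrix.mulVec_sub, Matrix.mulVec_mulVec, ← pow_succ']
      calc r + (x *ᵥ v - x ^ (L + 1) *ᵥ v) = (r + x *ᵥ v) - x ^ (L + 1) *ᵥ v := by abel
        _ = v - x ^ (L + 1) *ᵥ v := by rw [hvfix]
  -- convergence
  have hconv : Tendsto (fun L : ℕ => tdW γ P r L j) atTop (𝓝 (v j)) := by
    have key : Tendsto (fun L : ℕ => (x ^ L *ᵥ v) j) atTop (𝓝 0) := by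
      apply squeeze_zero_norm (f := fun L : ℕ => (x ^ L *ᵥ v) j) (a := fun L => ‖x‖ ^ L * ‖v‖)
      · intro L
        calc ‖(x ^ L *ᵥ v) j‖ ≤ ‖x ^ L *ᵥ v‖ := norm_le_pi_norm _ j
          _ ≤ ‖x ^ L‖ * ‖v‖ := Matrix.linfty_opNorm_mulVec _ _
          _ ≤ ‖x‖ ^ L * ‖v‖ := by
              exact mul_le_mul_of_nonneg_right (norm_pow_le x L) (norm_nonneg v)
      · rw [show (0 : ℝ) = 0 * ‖v‖ by ring]
        have habs : |‖x‖| < 1 := by rwa [abs_of_nonneg (norm_nonneg _)]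
        exact (tendsto_pow_atTop_nhds_zero_of_abs_lt_one habs).mul_const _
    have := tendsto_const_nhds.sub key (f := fun _ : ℕ => v j)
    simpa [htd] using this
  simpa [tfTD_eq_tdW] using hconv

end
end

section
/- (Lemma 2, part 2) For every l ≥ 0, max_{1≤i≤n} |r_i − (w_l)_i| ≤ (γ + γ^l) ‖v‖_∞; equivalently, the row vector Y_l = (r − w_l)ᵀ of context entries in the bottom row of the embedding evolved under the TD parameters satisfies ‖Y_l‖_1 ≤ (γ + γ^l) ‖v‖_∞, where ‖Y_l‖_1 is the operator norm induced by the ℓ1 vector norm (the maximum absolute column sum, which for a row vector is its maximum absolute entry). -/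
open Matrix Filter Topology

noncomputable section

lemma abs_le_norm_aux {n : ℕ} (x : Fin n → ℝ) (k : Fin n) : |x k| ≤ ‖x‖ := by
  simpa [Real.norm_eq_abs] using norm_le_pi_norm x k

lemma rs_mulVec_le {n : ℕ} {P : Matrix (Fin n) (Fin n) ℝ} (hP : RowStochastic P)
    (x : Fin n → ℝ) : ‖P.mulVec x‖ ≤ ‖x‖ := by
  rw [pi_norm_le_iff_of_nonneg (norm_nonneg x)]
  intro i
  calc ‖P.mulVec x i‖ = |∑ k, P i k * x k| := by
        simp [Matrix.mulVec, dotProduct, Real.norm_eq_abs]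
    _ ≤ ∑ k, |P i k * x k| := Finset.abs_sum_le_sum_abs _ _
    _ ≤ ∑ k, P i k * ‖x‖ := by
        refine Finset.sum_le_sum fun k _ => ?_
        rw [abs_mul, abs_of_nonneg (hP.1 i k)]
        exact mul_le_mul_of_nonneg_left (abs_le_norm_aux x k) (hP.1 i k)
    _ = ‖x‖ := by rw [← Finset.sum_mul, hP.2 i, one_mul]

/-- Lemma 2, part 2: `max_i |r_i - (w_l)_i| ≤ (γ + γ^l) ‖v‖_∞`,
i.e. `‖Y_l‖_1 = ‖r - w_l‖_∞ ≤ (γ + γ^l) ‖v‖_∞`. -/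
theorem stmt8 (n : ℕ) (hn : 1 ≤ n) (γ : ℝ) (hγ0 : 0 ≤ γ) (hγ1 : γ < 1)
    (P : Matrix (Fin n) (Fin n) ℝ) (hP : RowStochastic P) (r : Fin n → ℝ)
    (l : ℕ) :
    ‖r - tdW γ P r l‖ ≤ (γ + γ ^ l) * ‖valueV γ P r‖ := by

  set v := valueV γ P r with hv
  -- invertibility
  have hdet : ((1 : Matrix (Fin n) (Fin n) ℝ) - γ • P).det ≠ 0 := by
    intro hd
    obtain ⟨x, hx0, hx⟩ := (Matrix.exists_mulVec_eq_zero_iff).2 hd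
    have hxe : x = γ • P.mulVec x := by
      have := hx
      rw [Matrix.sub_mulVec, Matrix.one_mulVec, Matrix.smul_mulVec, sub_eq_zero] at this
      exact this
    have h1 : ‖x‖ ≤ γ * ‖x‖ := by
      calc ‖x‖ = ‖γ • P.mulVec x‖ := by rw [← hxe]
        _ = γ * ‖P.mulVec x‖ := by rw [norm_smul, Real.norm_eq_abs, abs_of_nonneg hγ0]
        _ ≤ γ * ‖x‖ := mul_le_mul_of_nonneg_left (rs_mulVec_le hP x) hγ0
    have hpos : 0 < ‖x‖ := norm_pos_iff.2 hx0
    nlinarith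
  have hAv : ((1 : Matrix (Fin n) (Fin n) ℝ) - γ • P).mulVec v = r := by
    rw [hv, valueV, Matrix.mulVec_mulVec, Matrix.mul_nonsing_inv _ (isUnit_iff_ne_zero.2 hdet),
      Matrix.one_mulVec]
  have hr : r = v - γ • P.mulVec v := by
    rw [← hAv, Matrix.sub_mulVec, Matrix.one_mulVec, Matrix.smul_mulVec]
  -- v - w_l = (γP)^l v
  have key : ∀ m : ℕ, v - tdW γ P r m = ((γ • P) ^ m).mulVec v := by
    intro m
    induction m with
    | zero => simp [tdW, Matrix.one_mulVec]
    | succ m ih =>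
      have : v - tdW γ P r (m + 1) = γ • P.mulVec (v - tdW γ P r m) := by
        rw [tdW]
        rw [hr]
        ext i
        simp [Matrix.mulVec_sub, Pi.sub_apply, Pi.smul_apply, Pi.add_apply]
        ring
      rw [this, ih, pow_succ', ← Matrix.mulVec_mulVec, Matrix.smul_mulVec]
  -- norm bound by induction
  have pow_bound : ∀ m : ℕ, ‖((γ • P) ^ m).mulVec v‖ ≤ γ ^ m * ‖v‖ := by
    intro m
    induction m with
    | zero => simp [Matrix.one_mulVec]
    | succ m ih =>
      rw [pow_succ', ← Matrix.mulVec_mulVec, Matrix.smul_mulVec]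
      calc ‖γ • P.mulVec (((γ • P) ^ m).mulVec v)‖
          = γ * ‖P.mulVec (((γ • P) ^ m).mulVec v)‖ := by
            rw [norm_smul, Real.norm_eq_abs, abs_of_nonneg hγ0]
        _ ≤ γ * ‖((γ • P) ^ m).mulVec v‖ :=
            mul_le_mul_of_nonneg_left (rs_mulVec_le hP _) hγ0
        _ ≤ γ * (γ ^ m * ‖v‖) := mul_le_mul_of_nonneg_left ih hγ0
        _ = γ ^ (m + 1) * ‖v‖ := by ring
  have hsplit : r - tdW γ P r l = ((γ • P) ^ l).mulVec v - γ • P.mulVec v := by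
    rw [← key l]; nth_rewrite 1 [hr]; abel
  rw [hsplit]
  calc ‖((γ • P) ^ l).mulVec v - γ • P.mulVec v‖
      ≤ ‖((γ • P) ^ l).mulVec v‖ + ‖γ • P.mulVec v‖ := norm_sub_le _ _
    _ ≤ γ ^ l * ‖v‖ + γ * ‖v‖ := by
        refine add_le_add (pow_bound l) ?_
        rw [norm_smul, Real.norm_eq_abs, abs_of_nonneg hγ0]
        exact mul_le_mul_of_nonneg_left (rs_mulVec_le hP v) hγ0
    _ = (γ + γ ^ l) * ‖v‖ := by ring


end
end

section
/- For every l ≥ 0 and every i ∈ {1,…,n}, the recursively defined matrices G_l^{(i)} (the layerwise gradients of the context entries of the looped Transformer with respect to the attention matrix A, evaluated at the TD parameters) satisfy ‖G_l^{(i)}‖_1 ≤ l · β, where β = n(1+γ)² ‖v‖_∞ and ‖·‖_1 is the operator norm induced by the ℓ1 vector norm (maximum absolute column sum). -/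
open Matrix Filter Topology

noncomputable section

section Aux

variable {n : ℕ} {γ : ℝ} {P : Matrix (Fin n) (Fin n) ℝ} {r : Fin n → ℝ}

lemma stoch_entry_le_one (hP : RowStochastic P) (i k : Fin n) : P i k ≤ 1 := by
  have h := hP.2 i
  have : P i k ≤ ∑ j, P i j :=
    Finset.single_le_sum (fun j _ => hP.1 i j) (Finset.mem_univ k)
  linarith

lemma stoch_abs_dot_le (hP : RowStochastic P) (z : Fin n → ℝ) (k : Fin n) :
    |∑ j, P k j * z j| ≤ ‖z‖ := by
  calc |∑ j, P k j * z j| ≤ ∑ j, |P k j * z j| := Finset.abs_sum_le_sum_abs _ _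
    _ ≤ ∑ j, P k j * ‖z‖ := by
        refine Finset.sum_le_sum fun j _ => ?_
        rw [abs_mul, abs_of_nonneg (hP.1 k j)]
        exact mul_le_mul_of_nonneg_left ((Real.norm_eq_abs _) ▸ norm_le_pi_norm z j) (hP.1 k j)
    _ = ‖z‖ := by rw [← Finset.sum_mul, hP.2 k, one_mul]

lemma valueV_fixed (hγ0 : 0 ≤ γ) (hγ1 : γ < 1) (hP : RowStochastic P) (k : Fin n) :
    valueV γ P r k = r k + γ * ∑ j, P k j * valueV γ P r j := by
  set M : Matrix (Fin n) (Fin n) ℝ := (1 : Matrix (Fin n) (Fin n) ℝ) - γ • P with hM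
  have hMvV : ∀ v : Fin n → ℝ, M.mulVec v = v - γ • P.mulVec v := by
    intro v
    rw [hM, Matrix.sub_mulVec, Matrix.one_mulVec, Matrix.smul_mulVec]
  have hinj : Function.Injective M.mulVec := by
    intro x y hxy
    have hz : M.mulVec (x - y) = 0 := by
      rw [Matrix.mulVec_sub, hxy, sub_self]
    set z := x - y with hzdef
    rw [hMvV] at hz
    have hz' : ∀ k, z k = γ * ∑ j, P k j * z j := by
      intro k
      have h2 := congrFun hz k
      simp only [Pi.sub_apply, Pi.smul_apply, Pi.zero_apply, smul_eq_mul,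
        Matrix.mulVec, dotProduct, sub_eq_zero] at h2
      exact h2
    have hn0 : ‖z‖ ≤ γ * ‖z‖ := by
      rcases isEmpty_or_nonempty (Fin n) with h | h
      · have : z = 0 := funext fun k => h.elim k
        rw [this]
        simp
      · rw [pi_norm_le_iff_of_nonneg (by positivity)]
        intro k
        rw [Real.norm_eq_abs, hz' k, abs_mul, abs_of_nonneg hγ0]
        exact mul_le_mul_of_nonneg_left (stoch_abs_dot_le hP z k) hγ0
    have hz0 : z = 0 := by
      have : ‖z‖ ≤ 0 := by nlinarith [norm_nonneg z]
      exact norm_le_zero_iff.mp this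
    exact sub_eq_zero.mp hz0
  have hU : IsUnit M := (Matrix.mulVec_injective_iff_isUnit).mp hinj
  have hdet : IsUnit M.det := (Matrix.isUnit_iff_isUnit_det M).mp hU
  have hMv : M.mulVec (valueV γ P r) = r := by
    unfold valueV
    rw [← hM, Matrix.mulVec_mulVec, Matrix.mul_nonsing_inv M hdet, Matrix.one_mulVec]
  rw [hMvV] at hMv
  have h2 := congrFun hMv k
  simp only [Pi.sub_apply, Pi.smul_apply, smul_eq_mul,
    Matrix.mulVec, dotProduct] at h2
  rw [← h2]
  ring

lemma tdW_close (hγ0 : 0 ≤ γ) (hγ1 : γ < 1) (hP : RowStochastic P) (l : ℕ) (k : Fin n) :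
    |valueV γ P r k - tdW γ P r l k| ≤ ‖valueV γ P r‖ := by
  induction l generalizing k with
  | zero =>
    simp only [tdW, Pi.zero_apply, sub_zero]
    exact (Real.norm_eq_abs _) ▸ norm_le_pi_norm (valueV γ P r) k
  | succ l ih =>
    have hvk := valueV_fixed (r := r) hγ0 hγ1 hP k
    have : valueV γ P r k - tdW γ P r (l+1) k
        = γ * ∑ j, P k j * (valueV γ P r j - tdW γ P r l j) := by
      simp only [tdW, Pi.add_apply, Pi.smul_apply, Matrix.mulVec, dotProduct,
        smul_eq_mul]
      rw [hvk]
      rw [Finset.mul_sum, Finset.mul_sum]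
      rw [show ∀ a b c : ℝ, a + b - (a + c) = b - c by intros; ring]
      rw [← Finset.sum_sub_distrib, Finset.mul_sum]
      exact Finset.sum_congr rfl fun j _ => by ring
    rw [this, abs_mul, abs_of_nonneg hγ0]
    calc γ * |∑ j, P k j * (valueV γ P r j - tdW γ P r l j)|
        ≤ γ * ∑ j, P k j * ‖valueV γ P r‖ := by
          refine mul_le_mul_of_nonneg_left ?_ hγ0
          calc |∑ j, P k j * (valueV γ P r j - tdW γ P r l j)|
              ≤ ∑ j, |P k j * (valueV γ P r j - tdW γ P r l j)| :=
                Finset.abs_sum_le_sum_abs _ _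
            _ ≤ ∑ j, P k j * ‖valueV γ P r‖ := by
                refine Finset.sum_le_sum fun j _ => ?_
                rw [abs_mul, abs_of_nonneg (hP.1 k j)]
                exact mul_le_mul_of_nonneg_left (ih j) (hP.1 k j)
      _ = γ * ‖valueV γ P r‖ := by rw [← Finset.sum_mul, hP.2 k, one_mul]
      _ ≤ 1 * ‖valueV γ P r‖ := by
          exact mul_le_mul_of_nonneg_right (le_of_lt hγ1) (norm_nonneg _)
      _ = ‖valueV γ P r‖ := one_mul _

lemma r_sub_tdW (hγ0 : 0 ≤ γ) (hγ1 : γ < 1) (hP : RowStochastic P) (l : ℕ) (k : Fin n) :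
    |r k - tdW γ P r l k| ≤ (1 + γ) * ‖valueV γ P r‖ := by
  have hvk := valueV_fixed (r := r) hγ0 hγ1 hP k
  have hrk : r k - tdW γ P r l k
      = (valueV γ P r k - tdW γ P r l k) - γ * ∑ j, P k j * valueV γ P r j := by
    rw [hvk]; ring
  rw [hrk]
  calc |(valueV γ P r k - tdW γ P r l k) - γ * ∑ j, P k j * valueV γ P r j|
      ≤ |valueV γ P r k - tdW γ P r l k| + |γ * ∑ j, P k j * valueV γ P r j| :=
        abs_sub _ _
    _ ≤ ‖valueV γ P r‖ + γ * ‖valueV γ P r‖ := by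
        refine add_le_add (tdW_close hγ0 hγ1 hP l k) ?_
        rw [abs_mul, abs_of_nonneg hγ0]
        exact mul_le_mul_of_nonneg_left (stoch_abs_dot_le hP _ k) hγ0
    _ = (1 + γ) * ‖valueV γ P r‖ := by ring

lemma Gseq_colsum (hγ0 : 0 ≤ γ) (hγ1 : γ < 1) (hP : RowStochastic P) (l : ℕ)
    (i : Fin n) (c : TwoN n) :
    ∑ p, |Gseq γ P r l i p c| ≤ (l : ℝ) * ((n : ℝ) * (1 + γ) ^ 2 * ‖valueV γ P r‖) := by
  set β := (n : ℝ) * (1 + γ) ^ 2 * ‖valueV γ P r‖ with hβ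
  have hβ0 : 0 ≤ β := by positivity
  induction l generalizing i c with
  | zero => simp [Gseq]
  | succ l ih =>
    set z : Fin n → ℝ := r - tdW γ P r l with hz
    have hzb : ∀ k, |z k| ≤ (1 + γ) * ‖valueV γ P r‖ := fun k =>
      r_sub_tdW hγ0 hγ1 hP l k
    have hG : ∀ p, Gseq γ P r (l+1) i p c =
        ((Xmat γ P).mulVec z p) * ((Xmat γ P).mulVec (Pi.single i 1) c)
        + γ * ∑ j, P i j * Gseq γ P r l j p c := by
      intro p
      simp [Gseq, Matrix.add_apply, Matrix.vecMulVec_apply, Matrix.smul_apply,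
        Matrix.sum_apply, smul_eq_mul, Finset.mul_sum, hz]
    have hb : |(Xmat γ P).mulVec (Pi.single i 1) c| ≤ 1 := by
      rw [Matrix.mulVec_single_one, Matrix.col_apply]
      cases c with
      | inl k =>
        simp only [Xmat, mul_one]
        split <;> simp
      | inr k =>
        simp only [Xmat, mul_one, abs_mul, abs_of_nonneg hγ0, abs_of_nonneg (hP.1 i k)]
        calc γ * P i k ≤ γ * 1 :=
              mul_le_mul_of_nonneg_left (stoch_entry_le_one hP i k) hγ0
          _ ≤ 1 := by linarith
    have ha : ∑ p, |(Xmat γ P).mulVec z p| ≤ (1 + γ) * ((n : ℝ) * ((1 + γ) * ‖valueV γ P r‖)) := by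
      rw [Fintype.sum_sum_type]
      have h1 : ∀ k0 : Fin n, (Xmat γ P).mulVec z (Sum.inl k0) = z k0 := by
        intro k0
        simp [Xmat, Matrix.mulVec, dotProduct, ite_mul]
      have h2 : ∀ k0 : Fin n, (Xmat γ P).mulVec z (Sum.inr k0) = γ * ∑ k, P k k0 * z k := by
        intro k0
        simp [Xmat, Matrix.mulVec, dotProduct, Finset.mul_sum, mul_assoc]
      have e1 : ∑ k0, |(Xmat γ P).mulVec z (Sum.inl k0)| ≤ (n : ℝ) * ((1 + γ) * ‖valueV γ P r‖) := by
        calc ∑ k0, |(Xmat γ P).mulVec z (Sum.inl k0)| = ∑ k0, |z k0| := by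
              simp only [h1]
          _ ≤ ∑ _k0 : Fin n, (1 + γ) * ‖valueV γ P r‖ :=
              Finset.sum_le_sum fun k0 _ => hzb k0
          _ = (n : ℝ) * ((1 + γ) * ‖valueV γ P r‖) := by simp [Finset.sum_const, mul_comm]
      have e2 : ∑ k0, |(Xmat γ P).mulVec z (Sum.inr k0)| ≤ γ * ((n : ℝ) * ((1 + γ) * ‖valueV γ P r‖)) := by
        calc ∑ k0, |(Xmat γ P).mulVec z (Sum.inr k0)|
            = ∑ k0, |γ * ∑ k, P k k0 * z k| := by simp only [h2]
          _ ≤ ∑ k0, γ * ∑ k, P k k0 * |z k| := by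
              refine Finset.sum_le_sum fun k0 _ => ?_
              rw [abs_mul, abs_of_nonneg hγ0]
              refine mul_le_mul_of_nonneg_left ?_ hγ0
              calc |∑ k, P k k0 * z k| ≤ ∑ k, |P k k0 * z k| :=
                    Finset.abs_sum_le_sum_abs _ _
                _ ≤ ∑ k, P k k0 * |z k| := by
                    refine Finset.sum_le_sum fun k _ => ?_
                    rw [abs_mul, abs_of_nonneg (hP.1 k k0)]
          _ = γ * ∑ k, (∑ k0, P k k0) * |z k| := by
              rw [← Finset.mul_sum, Finset.sum_comm]
              congr 1
              exact Finset.sum_congr rfl fun k _ => (Finset.sum_mul _ _ _).symm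
          _ = γ * ∑ k, |z k| := by
              congr 1
              exact Finset.sum_congr rfl fun k _ => by rw [hP.2 k, one_mul]
          _ ≤ γ * ((n : ℝ) * ((1 + γ) * ‖valueV γ P r‖)) := by
              refine mul_le_mul_of_nonneg_left ?_ hγ0
              calc ∑ k, |z k| ≤ ∑ _k : Fin n, (1 + γ) * ‖valueV γ P r‖ :=
                    Finset.sum_le_sum fun k _ => hzb k
                _ = (n : ℝ) * ((1 + γ) * ‖valueV γ P r‖) := by
                    simp [Finset.sum_const, mul_comm]
      linarith
    calc ∑ p, |Gseq γ P r (l+1) i p c|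
        ≤ ∑ p, (|(Xmat γ P).mulVec z p| * |(Xmat γ P).mulVec (Pi.single i 1) c|
            + γ * ∑ j, P i j * |Gseq γ P r l j p c|) := by
          refine Finset.sum_le_sum fun p _ => ?_
          rw [hG p]
          calc |((Xmat γ P).mulVec z p) * ((Xmat γ P).mulVec (Pi.single i 1) c)
                + γ * ∑ j, P i j * Gseq γ P r l j p c|
              ≤ |((Xmat γ P).mulVec z p) * ((Xmat γ P).mulVec (Pi.single i 1) c)|
                + |γ * ∑ j, P i j * Gseq γ P r l j p c| := abs_add_le _ _
            _ ≤ |(Xmat γ P).mulVec z p| * |(Xmat γ P).mulVec (Pi.single i 1) c|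
                + γ * ∑ j, P i j * |Gseq γ P r l j p c| := by
                rw [abs_mul]
                refine add_le_add le_rfl ?_
                rw [abs_mul, abs_of_nonneg hγ0]
                refine mul_le_mul_of_nonneg_left ?_ hγ0
                calc |∑ j, P i j * Gseq γ P r l j p c|
                    ≤ ∑ j, |P i j * Gseq γ P r l j p c| := Finset.abs_sum_le_sum_abs _ _
                  _ ≤ ∑ j, P i j * |Gseq γ P r l j p c| := by
                      refine Finset.sum_le_sum fun j _ => ?_
                      rw [abs_mul, abs_of_nonneg (hP.1 i j)]
      _ = (∑ p, |(Xmat γ P).mulVec z p|) * |(Xmat γ P).mulVec (Pi.single i 1) c|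
          + γ * ∑ j, P i j * ∑ p, |Gseq γ P r l j p c| := by
          rw [Finset.sum_add_distrib, ← Finset.sum_mul]
          congr 1
          rw [← Finset.mul_sum]
          congr 1
          rw [Finset.sum_comm]
          exact Finset.sum_congr rfl fun j _ => (Finset.mul_sum _ _ _).symm
      _ ≤ β + γ * ((l : ℝ) * β) := by
          refine add_le_add ?_ ?_
          · calc (∑ p, |(Xmat γ P).mulVec z p|) * |(Xmat γ P).mulVec (Pi.single i 1) c|
                ≤ (∑ p, |(Xmat γ P).mulVec z p|) * 1 := by
                  refine mul_le_mul_of_nonneg_left hb ?_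
                  positivity
              _ = ∑ p, |(Xmat γ P).mulVec z p| := mul_one _
              _ ≤ (1 + γ) * ((n : ℝ) * ((1 + γ) * ‖valueV γ P r‖)) := ha
              _ = β := by rw [hβ]; ring
          · calc γ * ∑ j, P i j * ∑ p, |Gseq γ P r l j p c|
                ≤ γ * ∑ j, P i j * ((l : ℝ) * β) := by
                  refine mul_le_mul_of_nonneg_left ?_ hγ0
                  exact Finset.sum_le_sum fun j _ =>
                    mul_le_mul_of_nonneg_left (ih j c) (hP.1 i j)
              _ = γ * ((l : ℝ) * β) := by rw [← Finset.sum_mul, hP.2 i, one_mul]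
      _ ≤ ((l : ℕ) + 1 : ℝ) * β := by nlinarith [mul_nonneg (Nat.cast_nonneg (α := ℝ) l) hβ0]
      _ = ((l + 1 : ℕ) : ℝ) * β := by push_cast; ring

end Aux

/-- `‖G_l^{(i)}‖_1 ≤ l β` with `β = n (1+γ)² ‖v‖_∞`. -/
theorem stmt10 (n : ℕ) (hn : 1 ≤ n) (γ : ℝ) (hγ0 : 0 ≤ γ) (hγ1 : γ < 1)
    (P : Matrix (Fin n) (Fin n) ℝ) (hP : RowStochastic P) (r : Fin n → ℝ)
    (l : ℕ) (i : Fin n) :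
    matL1 (Gseq γ P r l i) ≤ (l : ℝ) * ((n : ℝ) * (1 + γ) ^ 2 * ‖valueV γ P r‖) := by
  have hne : Nonempty (TwoN n) := ⟨Sum.inl ⟨0, hn⟩⟩
  exact ciSup_le fun c => Gseq_colsum hγ0 hγ1 hP l i c

end
end

section
/- For every l ≥ 0, the recursively defined matrices H_l (the layerwise gradients of the looped Transformer's query output with respect to the attention matrix A, evaluated at the TD parameters) satisfy ‖H_l‖_1 ≤ ((l² + l)/2) · β, where β = n(1+γ)² ‖v‖_∞ and ‖·‖_1 is the operator norm induced by the ℓ1 vector norm (maximum absolute column sum). -/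
open Matrix Filter Topology

noncomputable section

section stmt11aux

variable {n : ℕ} {γ : ℝ} {P : Matrix (Fin n) (Fin n) ℝ} {r : Fin n → ℝ}

lemma value_fixed (hγ0 : 0 ≤ γ) (hγ1 : γ < 1) (hP : RowStochastic P) :
    valueV γ P r = r + γ • P.mulVec (valueV γ P r) := by
  set M : Matrix (Fin n) (Fin n) ℝ := (1 : Matrix (Fin n) (Fin n) ℝ) - γ • P with hM
  have hker : ∀ x : Fin n → ℝ, M.mulVec x = 0 → x = 0 := by
    intro x hx
    have hxe : ∀ i, x i = γ * ∑ j, P i j * x j := by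
      intro i
      have := congrFun hx i
      rw [hM, Matrix.sub_mulVec, Matrix.smul_mulVec] at this
      simp only [Matrix.one_mulVec, Pi.sub_apply, Pi.smul_apply, Pi.zero_apply, smul_eq_mul,
        Matrix.mulVec, dotProduct] at this
      linarith
    have hb : ∀ i, |x i| ≤ γ * ‖x‖ := by
      intro i
      rw [hxe i, abs_mul, abs_of_nonneg hγ0]
      refine mul_le_mul_of_nonneg_left ?_ hγ0
      calc |∑ j, P i j * x j| ≤ ∑ j, |P i j * x j| := Finset.abs_sum_le_sum_abs _ _
        _ ≤ ∑ j, P i j * ‖x‖ := by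
            refine Finset.sum_le_sum fun j _ => ?_
            rw [abs_mul, abs_of_nonneg (hP.1 i j)]
            exact mul_le_mul_of_nonneg_left (by simpa using norm_le_pi_norm x j) (hP.1 i j)
        _ = ‖x‖ := by rw [← Finset.sum_mul, hP.2 i, one_mul]
    have hnx : ‖x‖ ≤ γ * ‖x‖ := by
      refine pi_norm_le_iff_of_nonneg (by positivity) |>.2 fun i => ?_
      simpa [Real.norm_eq_abs] using hb i
    have : ‖x‖ = 0 := by nlinarith [norm_nonneg x]
    exact norm_eq_zero.mp this
  have hinj : Function.Injective M.mulVec := by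
    intro a b hab
    have : M.mulVec (a - b) = 0 := by rw [Matrix.mulVec_sub, hab, sub_self]
    exact sub_eq_zero.mp (hker _ this)
  have hUd : IsUnit M.det :=
    (Matrix.isUnit_iff_isUnit_det M).mp (Matrix.mulVec_injective_iff_isUnit.mp hinj)
  have h1 : M.mulVec (valueV γ P r) = r := by
    rw [valueV, ← hM, Matrix.mulVec_mulVec, Matrix.mul_nonsing_inv M hUd, Matrix.one_mulVec]
  have := congrArg (fun y => y + γ • P.mulVec (valueV γ P r)) h1
  simp only [hM, Matrix.sub_mulVec, Matrix.smul_mulVec, Matrix.one_mulVec] at this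
  rw [← this]; abel

lemma stoch_mulVec_abs_le (hP : RowStochastic P) {x : Fin n → ℝ} {c : ℝ}
    (hc : ∀ j, |x j| ≤ c) (i : Fin n) : |(P.mulVec x) i| ≤ c := by
  have : (P.mulVec x) i = ∑ j, P i j * x j := rfl
  rw [this]
  calc |∑ j, P i j * x j| ≤ ∑ j, |P i j * x j| := Finset.abs_sum_le_sum_abs _ _
    _ ≤ ∑ j, P i j * c := by
        refine Finset.sum_le_sum fun j _ => ?_
        rw [abs_mul, abs_of_nonneg (hP.1 i j)]
        exact mul_le_mul_of_nonneg_left (hc j) (hP.1 i j)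
    _ = c := by rw [← Finset.sum_mul, hP.2 i, one_mul]

lemma td_err (hγ0 : 0 ≤ γ) (hγ1 : γ < 1) (hP : RowStochastic P) :
    ∀ l i, |valueV γ P r i - tdW γ P r l i| ≤ γ ^ l * ‖valueV γ P r‖ := by
  intro l
  induction l with
  | zero =>
    intro i
    simpa [tdW, Real.norm_eq_abs] using norm_le_pi_norm (valueV γ P r) i
  | succ l ih =>
    intro i
    have hv := value_fixed (r := r) hγ0 hγ1 hP
    have h1 : valueV γ P r i - tdW γ P r (l + 1) i
        = γ * (P.mulVec (fun j => valueV γ P r j - tdW γ P r l j)) i := by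
      conv_lhs => rw [congrFun hv i]
      have h2 : (P.mulVec (fun j => valueV γ P r j - tdW γ P r l j)) i
          = (P.mulVec (valueV γ P r)) i - (P.mulVec (tdW γ P r l)) i := by
        simp [Matrix.mulVec, dotProduct, mul_sub, Finset.sum_sub_distrib]
      rw [h2]
      simp [tdW]
      ring
    rw [h1, abs_mul, abs_of_nonneg hγ0]
    calc γ * |(P.mulVec (fun j => valueV γ P r j - tdW γ P r l j)) i|
        ≤ γ * (γ ^ l * ‖valueV γ P r‖) :=
          mul_le_mul_of_nonneg_left (stoch_mulVec_abs_le hP (fun j => ih j) i) hγ0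
      _ = γ ^ (l + 1) * ‖valueV γ P r‖ := by ring

lemma rw_bound (hγ0 : 0 ≤ γ) (hγ1 : γ < 1) (hP : RowStochastic P) (l : ℕ) (i : Fin n) :
    |(r - tdW γ P r l) i| ≤ (1 + γ) * ‖valueV γ P r‖ := by
  have hv := value_fixed (r := r) hγ0 hγ1 hP
  have hri : r i = valueV γ P r i - γ * (P.mulVec (valueV γ P r)) i := by
    have := congrFun hv i
    simp only [Pi.add_apply, Pi.smul_apply, smul_eq_mul] at this
    linarith
  have h1 : (r - tdW γ P r l) i
      = (valueV γ P r i - tdW γ P r l i) - γ * (P.mulVec (valueV γ P r)) i := by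
    simp only [Pi.sub_apply]; rw [hri]; ring
  rw [h1]
  have h2 := td_err (r := r) hγ0 hγ1 hP l i
  have h3' : ∀ j, |valueV γ P r j| ≤ ‖valueV γ P r‖ := fun j => by
    simpa [Real.norm_eq_abs] using norm_le_pi_norm (valueV γ P r) j
  have h3 : |(P.mulVec (valueV γ P r)) i| ≤ ‖valueV γ P r‖ :=
    stoch_mulVec_abs_le hP h3' i
  have h4 : γ ^ l ≤ 1 := pow_le_one₀ hγ0 hγ1.le
  have h5 : γ ^ l * ‖valueV γ P r‖ ≤ ‖valueV γ P r‖ := by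
    nlinarith [norm_nonneg (valueV γ P r)]
  calc |(valueV γ P r i - tdW γ P r l i) - γ * (P.mulVec (valueV γ P r)) i|
      ≤ |valueV γ P r i - tdW γ P r l i| + |γ * (P.mulVec (valueV γ P r)) i| :=
        abs_sub _ _
    _ ≤ ‖valueV γ P r‖ + γ * ‖valueV γ P r‖ := by
        rw [abs_mul, abs_of_nonneg hγ0]
        exact add_le_add (h2.trans h5) (mul_le_mul_of_nonneg_left h3 hγ0)
    _ = (1 + γ) * ‖valueV γ P r‖ := by ring

lemma X_colsum (hγ0 : 0 ≤ γ) (hP : RowStochastic P) (i : Fin n) :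
    ∑ p, |Xmat γ P p i| = 1 + γ := by
  rw [Fintype.sum_sum_type]
  have h1 : ∑ k : Fin n, |Xmat γ P (Sum.inl k) i| = 1 := by
    simp only [Xmat, apply_ite abs, abs_one, abs_zero]
    simp
  have h2 : ∑ k : Fin n, |Xmat γ P (Sum.inr k) i| = γ := by
    simp only [Xmat]
    have : ∀ k, |γ * P i k| = γ * P i k := fun k =>
      abs_of_nonneg (mul_nonneg hγ0 (hP.1 i k))
    rw [Finset.sum_congr rfl fun k _ => this k, ← Finset.mul_sum, hP.2 i, mul_one]
  rw [h1, h2]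

lemma X_entry_le (hγ0 : 0 ≤ γ) (hγ1 : γ < 1) (hP : RowStochastic P) (p : TwoN n) (i : Fin n) :
    |Xmat γ P p i| ≤ 1 := by
  cases p with
  | inl k => simp only [Xmat]; split_ifs <;> simp
  | inr k =>
    simp only [Xmat]
    rw [abs_of_nonneg (mul_nonneg hγ0 (hP.1 i k))]
    have hk : P i k ≤ 1 := by
      rw [← hP.2 i]
      exact Finset.single_le_sum (fun j _ => hP.1 i j) (Finset.mem_univ k)
    nlinarith

lemma XmulVec_l1 (hγ0 : 0 ≤ γ) (hP : RowStochastic P) {y : Fin n → ℝ} {c : ℝ}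
    (hc : ∀ i, |y i| ≤ c) :
    ∑ p, |(Xmat γ P).mulVec y p| ≤ (1 + γ) * ((n : ℝ) * c) := by
  have key : ∀ p, |(Xmat γ P).mulVec y p| ≤ ∑ i, |Xmat γ P p i| * |y i| := by
    intro p
    calc |∑ i, Xmat γ P p i * y i| ≤ ∑ i, |Xmat γ P p i * y i| := Finset.abs_sum_le_sum_abs _ _
      _ = ∑ i, |Xmat γ P p i| * |y i| := by simp [abs_mul]
  calc ∑ p, |(Xmat γ P).mulVec y p| ≤ ∑ p, ∑ i, |Xmat γ P p i| * |y i| :=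
        Finset.sum_le_sum fun p _ => key p
    _ = ∑ i, (∑ p, |Xmat γ P p i|) * |y i| := by
        rw [Finset.sum_comm]
        exact Finset.sum_congr rfl fun i _ => (Finset.sum_mul _ _ _).symm
    _ = ∑ i, (1 + γ) * |y i| := Finset.sum_congr rfl fun i _ => by rw [X_colsum hγ0 hP]
    _ ≤ ∑ i : Fin n, (1 + γ) * c := Finset.sum_le_sum fun i _ =>
        mul_le_mul_of_nonneg_left (hc i) (by linarith)
    _ = (1 + γ) * ((n : ℝ) * c) := by
        rw [Finset.sum_const, Finset.card_univ, Fintype.card_fin, nsmul_eq_mul]; ring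

lemma Xrw_l1 (hγ0 : 0 ≤ γ) (hγ1 : γ < 1) (hP : RowStochastic P) (l : ℕ) :
    ∑ p, |(Xmat γ P).mulVec (r - tdW γ P r l) p|
      ≤ (n : ℝ) * (1 + γ) ^ 2 * ‖valueV γ P r‖ := by
  have := XmulVec_l1 (y := r - tdW γ P r l) (c := (1 + γ) * ‖valueV γ P r‖) hγ0 hP
    (fun i => rw_bound hγ0 hγ1 hP l i)
  calc ∑ p, |(Xmat γ P).mulVec (r - tdW γ P r l) p|
      ≤ (1 + γ) * ((n : ℝ) * ((1 + γ) * ‖valueV γ P r‖)) := this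
    _ = (n : ℝ) * (1 + γ) ^ 2 * ‖valueV γ P r‖ := by ring

lemma G_colsum (hγ0 : 0 ≤ γ) (hγ1 : γ < 1) (hP : RowStochastic P) :
    ∀ l (i : Fin n) (q : TwoN n), ∑ p, |Gseq γ P r l i p q|
      ≤ (l : ℝ) * ((n : ℝ) * (1 + γ) ^ 2 * ‖valueV γ P r‖) := by
  intro l
  induction l with
  | zero => intro i q; simp [Gseq]
  | succ l ih =>
    intro i q
    set β := (n : ℝ) * (1 + γ) ^ 2 * ‖valueV γ P r‖ with hβ
    have hβ0 : 0 ≤ β := by positivity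
    have hentry : ∀ p, Gseq γ P r (l + 1) i p q
        = (Xmat γ P).mulVec (r - tdW γ P r l) p * (Xmat γ P).mulVec (Pi.single i 1) q
          + γ * ∑ j, P i j * Gseq γ P r l j p q := by
      intro p
      simp [Gseq, Matrix.vecMulVec_apply, Matrix.add_apply, Matrix.smul_apply,
        Matrix.sum_apply, Finset.mul_sum]
    have hXsq : |(Xmat γ P).mulVec (Pi.single i 1) q| ≤ 1 := by
      have : (Xmat γ P).mulVec (Pi.single i 1) q = Xmat γ P q i := by
        simp [Matrix.mulVec, dotProduct, Pi.single_apply, mul_ite]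
      rw [this]
      exact X_entry_le hγ0 hγ1 hP q i
    calc ∑ p, |Gseq γ P r (l + 1) i p q|
        ≤ ∑ p, (|(Xmat γ P).mulVec (r - tdW γ P r l) p|
              * |(Xmat γ P).mulVec (Pi.single i 1) q|
            + γ * ∑ j, P i j * |Gseq γ P r l j p q|) := by
          refine Finset.sum_le_sum fun p _ => ?_
          rw [hentry p]
          refine (abs_add_le _ _).trans (add_le_add ?_ ?_)
          · rw [abs_mul]
          · rw [abs_mul, abs_of_nonneg hγ0]
            refine mul_le_mul_of_nonneg_left ?_ hγ0
            refine (Finset.abs_sum_le_sum_abs _ _).trans ?_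
            refine Finset.sum_le_sum fun j _ => ?_
            rw [abs_mul, abs_of_nonneg (hP.1 i j)]
      _ = (∑ p, |(Xmat γ P).mulVec (r - tdW γ P r l) p|)
              * |(Xmat γ P).mulVec (Pi.single i 1) q|
            + γ * ∑ j, P i j * ∑ p, |Gseq γ P r l j p q| := by
          have swap : ∑ p : TwoN n, γ * ∑ j, P i j * |Gseq γ P r l j p q|
              = γ * ∑ j, P i j * ∑ p : TwoN n, |Gseq γ P r l j p q| := by
            calc ∑ p : TwoN n, γ * ∑ j, P i j * |Gseq γ P r l j p q|
                = γ * ∑ p : TwoN n, ∑ j, P i j * |Gseq γ P r l j p q| :=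
                  (Finset.mul_sum _ _ _).symm
              _ = γ * ∑ j, ∑ p : TwoN n, P i j * |Gseq γ P r l j p q| := by
                  rw [Finset.sum_comm]
              _ = γ * ∑ j, P i j * ∑ p : TwoN n, |Gseq γ P r l j p q| := by
                  congr 1
                  exact Finset.sum_congr rfl fun j _ => (Finset.mul_sum _ _ _).symm
          rw [Finset.sum_add_distrib, ← Finset.sum_mul, swap]
      _ ≤ β * 1 + γ * ∑ j, P i j * ((l : ℝ) * β) := by
          refine add_le_add ?_ ?_
          · exact mul_le_mul (Xrw_l1 hγ0 hγ1 hP l) hXsq (abs_nonneg _) hβ0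
          · refine mul_le_mul_of_nonneg_left ?_ hγ0
            exact Finset.sum_le_sum fun j _ =>
              mul_le_mul_of_nonneg_left (ih j q) (hP.1 i j)
      _ = β + γ * ((l : ℝ) * β) := by rw [← Finset.sum_mul, hP.2 i]; ring
      _ ≤ ((l : ℝ) + 1) * β := by nlinarith [mul_nonneg (Nat.cast_nonneg (α := ℝ) l) hβ0]
      _ = ((l + 1 : ℕ) : ℝ) * β := by push_cast; ring

lemma H_colsum (hγ0 : 0 ≤ γ) (hγ1 : γ < 1) (hP : RowStochastic P) (ω : Fin n) :
    ∀ l (q : TwoN n), ∑ p, |Hseq γ P r ω l p q|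
      ≤ (((l : ℝ) ^ 2 + l) / 2) * ((n : ℝ) * (1 + γ) ^ 2 * ‖valueV γ P r‖) := by
  intro l
  induction l with
  | zero => intro q; simp [Hseq]
  | succ l ih =>
    intro q
    set β := (n : ℝ) * (1 + γ) ^ 2 * ‖valueV γ P r‖ with hβ
    have hβ0 : 0 ≤ β := by positivity
    have hxq : |xqv ω q| ≤ 1 := by
      cases q with
      | inl k => simp only [xqv]; split_ifs <;> simp
      | inr k => simp [xqv]
    have hentry : ∀ p, Hseq γ P r ω (l + 1) p q
        = Hseq γ P r ω l p q
          + (Xmat γ P).mulVec (r - tdW γ P r l) p * xqv ω q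
          - Gseq γ P r l ω p q := by
      intro p
      simp [Hseq, Matrix.vecMulVec_apply, Matrix.add_apply, Matrix.sub_apply]
    calc ∑ p, |Hseq γ P r ω (l + 1) p q|
        ≤ ∑ p, (|Hseq γ P r ω l p q|
            + |(Xmat γ P).mulVec (r - tdW γ P r l) p| * |xqv ω q|
            + |Gseq γ P r l ω p q|) := by
          refine Finset.sum_le_sum fun p _ => ?_
          rw [hentry p]
          calc |Hseq γ P r ω l p q + (Xmat γ P).mulVec (r - tdW γ P r l) p * xqv ω q
                - Gseq γ P r l ω p q|
              ≤ |Hseq γ P r ω l p q + (Xmat γ P).mulVec (r - tdW γ P r l) p * xqv ω q|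
                + |Gseq γ P r l ω p q| := abs_sub _ _
            _ ≤ |Hseq γ P r ω l p q| + |(Xmat γ P).mulVec (r - tdW γ P r l) p * xqv ω q|
                + |Gseq γ P r l ω p q| := by
                have := abs_add_le (Hseq γ P r ω l p q)
                  ((Xmat γ P).mulVec (r - tdW γ P r l) p * xqv ω q)
                linarith
            _ = |Hseq γ P r ω l p q| + |(Xmat γ P).mulVec (r - tdW γ P r l) p| * |xqv ω q|
                + |Gseq γ P r l ω p q| := by rw [abs_mul]
      _ = (∑ p, |Hseq γ P r ω l p q|)
            + (∑ p, |(Xmat γ P).mulVec (r - tdW γ P r l) p|) * |xqv ω q|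
            + ∑ p, |Gseq γ P r l ω p q| := by
          rw [Finset.sum_add_distrib, Finset.sum_add_distrib, ← Finset.sum_mul]
      _ ≤ (((l : ℝ) ^ 2 + l) / 2) * β + β * 1 + (l : ℝ) * β := by
          refine add_le_add (add_le_add (ih q) ?_) (G_colsum hγ0 hγ1 hP l ω q)
          exact mul_le_mul (Xrw_l1 hγ0 hγ1 hP l) hxq (abs_nonneg _) hβ0
      _ ≤ ((((l + 1 : ℕ) : ℝ) ^ 2 + ((l + 1 : ℕ) : ℝ)) / 2) * β := by
          push_cast
          nlinarith [mul_nonneg (sq_nonneg ((l : ℝ))) hβ0]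

end stmt11aux

/-- `‖H_l‖_1 ≤ ((l² + l)/2) β` with `β = n (1+γ)² ‖v‖_∞`. -/
theorem stmt11 (n : ℕ) (hn : 1 ≤ n) (γ : ℝ) (hγ0 : 0 ≤ γ) (hγ1 : γ < 1)
    (P : Matrix (Fin n) (Fin n) ℝ) (hP : RowStochastic P) (r : Fin n → ℝ)
    (ω : Fin n) (l : ℕ) :
    matL1 (Hseq γ P r ω l) ≤ (((l : ℝ) ^ 2 + l) / 2) * ((n : ℝ) * (1 + γ) ^ 2 * ‖valueV γ P r‖) := by
  haveI : Nonempty (Fin n) := ⟨⟨0, hn⟩⟩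
  exact ciSup_le fun q => H_colsum hγ0 hγ1 hP ω l q

end
end

section
/- For every l ≥ 0, the recursively defined matrices U_l (the layerwise gradients of the context entries of the looped Transformer with respect to the row-vector parameter u, evaluated at the TD parameters) satisfy ‖U_l‖_1 ≤ l · (1+γ)², where ‖·‖_1 is the operator norm induced by the ℓ1 vector norm (maximum absolute column sum). -/
open Matrix Filter Topology

noncomputable section

/-- Column-sum bound for a product. -/
lemma colsum_mul_le {m k p : Type*} [Fintype m] [Fintype k] [Fintype p]
    (A : Matrix m k ℝ) (B : Matrix k p ℝ) (j : p) (a : ℝ)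
    (h : ∀ t, ∑ i, |A i t| ≤ a) :
    ∑ i, |(A * B) i j| ≤ a * ∑ t, |B t j| := by
  calc ∑ i, |(A * B) i j| ≤ ∑ i, ∑ t, |A i t| * |B t j| := by
        refine Finset.sum_le_sum fun i _ => ?_
        rw [Matrix.mul_apply]
        calc |∑ t, A i t * B t j| ≤ ∑ t, |A i t * B t j| :=
              Finset.abs_sum_le_sum_abs _ _
          _ = ∑ t, |A i t| * |B t j| := by simp [abs_mul]
    _ = ∑ t, (∑ i, |A i t|) * |B t j| := by
        rw [Finset.sum_comm]; simp [Finset.sum_mul]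
    _ ≤ ∑ t, a * |B t j| := by
        refine Finset.sum_le_sum fun t _ => ?_
        exact mul_le_mul_of_nonneg_right (h t) (abs_nonneg _)
    _ = a * ∑ t, |B t j| := by rw [Finset.mul_sum]

lemma XtAX {n : ℕ} (γ : ℝ) (P : Matrix (Fin n) (Fin n) ℝ) :
    (Xmat γ P)ᵀ * Atd n * Xmat γ P = γ • Pᵀ - 1 := by
  ext i i'
  simp [Matrix.mul_apply, Atd, Xmat, Matrix.fromBlocks, Fintype.sum_sum_type,
    Matrix.one_apply, Finset.mul_sum, mul_comm, eq_comm, sub_eq_neg_add]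

lemma colsum_X {n : ℕ} (γ : ℝ) (hγ0 : 0 ≤ γ)
    (P : Matrix (Fin n) (Fin n) ℝ) (hP : RowStochastic P) (i : Fin n) :
    ∑ p, |Xmat γ P p i| = 1 + γ := by
  rw [Fintype.sum_sum_type]
  have h1 : ∑ k, |Xmat γ P (Sum.inl k) i| = 1 := by
    simp [Xmat, apply_ite abs]
  have h2 : ∑ k, |Xmat γ P (Sum.inr k) i| = γ := by
    have : ∀ k, |Xmat γ P (Sum.inr k) i| = γ * P i k := by
      intro k
      simp only [Xmat, abs_mul, abs_of_nonneg hγ0, abs_of_nonneg (hP.1 i k)]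
    simp only [this, ← Finset.mul_sum, hP.2 i, mul_one]
  rw [h1, h2]

/-- `‖U_l‖_1 ≤ l (1+γ)²`. -/
theorem stmt12 (n : ℕ) (hn : 1 ≤ n) (γ : ℝ) (hγ0 : 0 ≤ γ) (hγ1 : γ < 1)
    (P : Matrix (Fin n) (Fin n) ℝ) (hP : RowStochastic P) (r : Fin n → ℝ)
    (l : ℕ) :
    matL1 (Useq γ P l) ≤ (l : ℝ) * (1 + γ) ^ 2 := by
  have key : ∀ l : ℕ, ∀ j, ∑ i, |Useq γ P l i j| ≤ (l : ℝ) * (1 + γ) ^ 2 := by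
    intro l
    induction l with
    | zero => intro j; simp [Useq]
    | succ l ih =>
      intro j
      have hXcol := colsum_X γ hγ0 P hP
      -- bound on the first summand
      have h1 : ∑ i, |(Xmat γ P * (Xmat γ P)ᵀ * Atd n * Xmat γ P) i j| ≤ (1 + γ) ^ 2 := by
        have hrw : Xmat γ P * (Xmat γ P)ᵀ * Atd n * Xmat γ P
            = Xmat γ P * (γ • Pᵀ - 1) := by
          rw [← XtAX γ P]
          simp only [Matrix.mul_assoc]
        rw [hrw]
        have hB : ∑ t, |(γ • Pᵀ - (1 : Matrix (Fin n) (Fin n) ℝ)) t j| ≤ 1 + γ := by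
          have hle : ∀ t, |(γ • Pᵀ - (1 : Matrix (Fin n) (Fin n) ℝ)) t j|
              ≤ γ * P j t + (if t = j then 1 else 0) := by
            intro t
            have : |(γ • Pᵀ - (1 : Matrix (Fin n) (Fin n) ℝ)) t j|
                ≤ |γ * P j t| + |(1 : Matrix (Fin n) (Fin n) ℝ) t j| := by
              simpa [Matrix.sub_apply, Matrix.smul_apply, Matrix.transpose_apply,
                smul_eq_mul] using abs_sub (γ * P j t) ((1 : Matrix (Fin n) (Fin n) ℝ) t j)
            refine this.trans ?_
            rw [abs_mul, abs_of_nonneg hγ0, abs_of_nonneg (hP.1 j t)]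
            simp [Matrix.one_apply, apply_ite abs]
          calc ∑ t, |(γ • Pᵀ - (1 : Matrix (Fin n) (Fin n) ℝ)) t j|
              ≤ ∑ t, (γ * P j t + (if t = j then 1 else 0)) :=
                Finset.sum_le_sum fun t _ => hle t
            _ = 1 + γ := by
                rw [Finset.sum_add_distrib, ← Finset.mul_sum, hP.2 j]
                simp [add_comm]
        calc ∑ i, |(Xmat γ P * (γ • Pᵀ - (1 : Matrix (Fin n) (Fin n) ℝ))) i j|
            ≤ (1 + γ) * ∑ t, |(γ • Pᵀ - (1 : Matrix (Fin n) (Fin n) ℝ)) t j| :=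
              colsum_mul_le _ _ _ _ (fun t => (hXcol t).le)
          _ ≤ (1 + γ) * (1 + γ) := by
              exact mul_le_mul_of_nonneg_left hB (by linarith)
          _ = (1 + γ) ^ 2 := by ring
      -- bound on the second summand
      have h2 : ∑ i, |(Useq γ P l * Pᵀ) i j| ≤ (l : ℝ) * (1 + γ) ^ 2 := by
        have := colsum_mul_le (Useq γ P l) Pᵀ j ((l : ℝ) * (1 + γ) ^ 2) ih
        refine this.trans ?_
        have hPcol : ∑ t, |Pᵀ t j| = 1 := by
          have : ∀ t, |Pᵀ t j| = P j t := fun t => abs_of_nonneg (hP.1 j t)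
          simp only [this, hP.2 j]
        rw [hPcol, mul_one]
      have hsplit : ∑ i, |Useq γ P (l + 1) i j|
          ≤ ∑ i, |(Xmat γ P * (Xmat γ P)ᵀ * Atd n * Xmat γ P) i j|
            + γ * ∑ i, |(Useq γ P l * Pᵀ) i j| := by
        rw [Finset.mul_sum, ← Finset.sum_add_distrib]
        refine Finset.sum_le_sum fun i _ => ?_
        show |(Useq γ P (l+1)) i j| ≤ _
        simp only [Useq, Matrix.add_apply, Matrix.smul_apply, smul_eq_mul]
        refine (abs_add_le _ _).trans ?_
        gcongr
        rw [abs_mul, abs_of_nonneg hγ0]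
      refine hsplit.trans ?_
      have hl : (0:ℝ) ≤ l := Nat.cast_nonneg l
      have hγl : γ * ((l : ℝ) * (1 + γ) ^ 2) ≤ (l : ℝ) * (1 + γ) ^ 2 := by
        nlinarith [mul_nonneg hl (sq_nonneg (1 + γ))]
      have : γ * ∑ i, |(Useq γ P l * Pᵀ) i j| ≤ γ * ((l : ℝ) * (1 + γ) ^ 2) :=
        mul_le_mul_of_nonneg_left h2 hγ0
      push_cast
      linarith
  haveI : Nonempty (Fin n) := Fin.pos_iff_nonempty.mp hn
  exact ciSup_le (key l)

end
end

section
/- For every l ≥ 0, the recursively defined vectors h_l (the layerwise gradients of the looped Transformer's query output with respect to the row-vector parameter u, evaluated at the TD parameters) satisfy ‖h_l‖_1 ≤ ((l² + l)/2)(1+γ)² + l(1+γ), where ‖h_l‖_1 is the sum of absolute entries of h_l. -/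
open Matrix Filter Topology

noncomputable section

section aux13

variable {n : ℕ}

lemma colX_sum (γ : ℝ) (hγ0 : 0 ≤ γ) {P : Matrix (Fin n) (Fin n) ℝ}
    (hP : RowStochastic P) (i : Fin n) :
    ∑ p : TwoN n, |Xmat γ P p i| = 1 + γ := by
  rw [Fintype.sum_sum_type]
  have h1 : ∑ k : Fin n, |Xmat γ P (Sum.inl k) i| = 1 := by
    simp [Xmat, apply_ite abs]
  have h2 : ∑ k : Fin n, |Xmat γ P (Sum.inr k) i| = γ := by
    have : ∀ k, |Xmat γ P (Sum.inr k) i| = γ * P i k := fun k => by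
      simp [Xmat, abs_of_nonneg (mul_nonneg hγ0 (hP.1 i k))]
    rw [Finset.sum_congr rfl fun k _ => this k, ← Finset.mul_sum, hP.2 i, mul_one]
  rw [h1, h2]

lemma mulVecX_l1 (γ : ℝ) (hγ0 : 0 ≤ γ) {P : Matrix (Fin n) (Fin n) ℝ}
    (hP : RowStochastic P) (v : Fin n → ℝ) :
    ∑ p : TwoN n, |(Xmat γ P).mulVec v p| ≤ (1 + γ) * ∑ i, |v i| := by
  calc ∑ p : TwoN n, |(Xmat γ P).mulVec v p|
      ≤ ∑ p : TwoN n, ∑ i, |Xmat γ P p i| * |v i| := by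
        refine Finset.sum_le_sum fun p _ => ?_
        simp only [Matrix.mulVec, dotProduct]
        refine (Finset.abs_sum_le_sum_abs _ _).trans ?_
        exact le_of_eq (Finset.sum_congr rfl fun i _ => abs_mul _ _)
    _ = ∑ i, (∑ p : TwoN n, |Xmat γ P p i|) * |v i| := by
        rw [Finset.sum_comm]
        exact Finset.sum_congr rfl fun i _ => (Finset.sum_mul _ _ _).symm
    _ = ∑ i, (1 + γ) * |v i| := by
        exact Finset.sum_congr rfl fun i _ => by rw [colX_sum γ hγ0 hP i]
    _ = (1 + γ) * ∑ i, |v i| := by rw [Finset.mul_sum]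

lemma XtAtd_xq (γ : ℝ) {P : Matrix (Fin n) (Fin n) ℝ} (ω : Fin n) :
    ((Xmat γ P)ᵀ * Atd n).mulVec (xqv ω) = -(Pi.single ω 1 : Fin n → ℝ) := by
  funext i
  simp only [Matrix.mulVec, Matrix.mul_apply, dotProduct, Fintype.sum_sum_type,
    Matrix.transpose_apply, Xmat, Atd, xqv, Matrix.fromBlocks_apply₁₁,
    Matrix.fromBlocks_apply₁₂, Matrix.fromBlocks_apply₂₁, Matrix.fromBlocks_apply₂₂]
  simp [Pi.single_apply, Matrix.one_apply, Finset.sum_ite_eq, mul_ite, ite_mul, eq_comm]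

lemma XtAtdX_entry (γ : ℝ) {P : Matrix (Fin n) (Fin n) ℝ} (i j : Fin n) :
    ((Xmat γ P)ᵀ * Atd n * Xmat γ P) i j
      = -(if i = j then (1:ℝ) else 0) + γ * P j i := by
  have h := XtAtd_xq γ (P := P) (ω := j)
  have h2 : ((Xmat γ P)ᵀ * Atd n * Xmat γ P) i j
      = (((Xmat γ P)ᵀ * Atd n) * Xmat γ P).mulVec (Pi.single j 1) i := by
    rw [Matrix.mulVec_single]; simp [Matrix.mul_assoc]
  rw [h2, ← Matrix.mulVec_mulVec]
  have hx : (Xmat γ P).mulVec (Pi.single j (1:ℝ)) = fun p => Xmat γ P p j := by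
    rw [Matrix.mulVec_single]; simp; rfl
  rw [hx]
  simp only [Matrix.mulVec, Matrix.mul_apply, dotProduct, Fintype.sum_sum_type,
    Matrix.transpose_apply, Xmat, Atd, Matrix.fromBlocks_apply₁₁,
    Matrix.fromBlocks_apply₁₂, Matrix.fromBlocks_apply₂₁, Matrix.fromBlocks_apply₂₂]
  simp [Matrix.one_apply, Finset.mul_sum, mul_ite, ite_mul, Finset.sum_ite_eq, eq_comm, mul_comm]

lemma colXXAX (γ : ℝ) (hγ0 : 0 ≤ γ) {P : Matrix (Fin n) (Fin n) ℝ}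
    (hP : RowStochastic P) (j : Fin n) :
    ∑ p : TwoN n, |(Xmat γ P * (Xmat γ P)ᵀ * Atd n * Xmat γ P) p j|
      ≤ (1 + γ) ^ 2 := by
  have hcol : ∀ p, (Xmat γ P * (Xmat γ P)ᵀ * Atd n * Xmat γ P) p j
      = (Xmat γ P).mulVec (fun i => ((Xmat γ P)ᵀ * Atd n * Xmat γ P) i j) p := by
    intro p
    have : (fun i => ((Xmat γ P)ᵀ * Atd n * Xmat γ P) i j)
        = ((Xmat γ P)ᵀ * Atd n * Xmat γ P).mulVec (Pi.single j 1) := by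
      rw [Matrix.mulVec_single]; simp; rfl
    rw [this, Matrix.mulVec_mulVec, Matrix.mulVec_single]
    simp [Matrix.mul_assoc]
  have hv : ∑ i, |((Xmat γ P)ᵀ * Atd n * Xmat γ P) i j| ≤ 1 + γ := by
    calc ∑ i, |((Xmat γ P)ᵀ * Atd n * Xmat γ P) i j|
        ≤ ∑ i, ((if i = j then (1:ℝ) else 0) + γ * P j i) := by
          refine Finset.sum_le_sum fun i _ => ?_
          rw [XtAtdX_entry]
          refine (abs_add_le _ _).trans ?_
          rw [abs_neg, abs_of_nonneg (mul_nonneg hγ0 (hP.1 j i))]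
          gcongr
          split <;> simp
      _ = 1 + γ := by
          rw [Finset.sum_add_distrib, ← Finset.mul_sum, hP.2 j]
          simp
  calc ∑ p : TwoN n, |(Xmat γ P * (Xmat γ P)ᵀ * Atd n * Xmat γ P) p j|
      = ∑ p : TwoN n, |(Xmat γ P).mulVec (fun i => ((Xmat γ P)ᵀ * Atd n * Xmat γ P) i j) p| := by
        exact Finset.sum_congr rfl fun p _ => by rw [hcol]
    _ ≤ (1 + γ) * ∑ i, |((Xmat γ P)ᵀ * Atd n * Xmat γ P) i j| :=
        mulVecX_l1 γ hγ0 hP _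
    _ ≤ (1 + γ) * (1 + γ) := by
        have : (0:ℝ) ≤ 1 + γ := by linarith
        exact mul_le_mul_of_nonneg_left hv this
    _ = (1 + γ) ^ 2 := by ring

lemma colUseq (γ : ℝ) (hγ0 : 0 ≤ γ) (hγ1 : γ ≤ 1) {P : Matrix (Fin n) (Fin n) ℝ}
    (hP : RowStochastic P) : ∀ (l : ℕ) (j : Fin n),
    ∑ p : TwoN n, |Useq γ P l p j| ≤ (l : ℝ) * (1 + γ) ^ 2 := by
  intro l
  induction l with
  | zero => intro j; simp [Useq]
  | succ l ih =>
    intro j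
    have hentry : ∀ p, |Useq γ P (l+1) p j|
        ≤ |(Xmat γ P * (Xmat γ P)ᵀ * Atd n * Xmat γ P) p j|
          + γ * ∑ k, P j k * |Useq γ P l p k| := by
      intro p
      show |(Xmat γ P * (Xmat γ P)ᵀ * Atd n * Xmat γ P + γ • (Useq γ P l * Pᵀ)) p j| ≤ _
      refine (abs_add_le _ _).trans ?_
      gcongr
      rw [Matrix.smul_apply, smul_eq_mul, abs_mul, abs_of_nonneg hγ0]
      gcongr
      rw [Matrix.mul_apply]
      refine (Finset.abs_sum_le_sum_abs _ _).trans ?_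
      refine le_of_eq (Finset.sum_congr rfl fun k _ => ?_)
      rw [Matrix.transpose_apply, abs_mul, abs_of_nonneg (hP.1 j k), mul_comm]
    calc ∑ p : TwoN n, |Useq γ P (l+1) p j|
        ≤ ∑ p : TwoN n, (|(Xmat γ P * (Xmat γ P)ᵀ * Atd n * Xmat γ P) p j|
            + γ * ∑ k, P j k * |Useq γ P l p k|) :=
          Finset.sum_le_sum fun p _ => hentry p
      _ = (∑ p : TwoN n, |(Xmat γ P * (Xmat γ P)ᵀ * Atd n * Xmat γ P) p j|)
            + γ * ∑ k, P j k * ∑ p : TwoN n, |Useq γ P l p k| := by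
          rw [Finset.sum_add_distrib, ← Finset.mul_sum]
          congr 1
          rw [Finset.sum_comm]
          exact congrArg _ (Finset.sum_congr rfl fun k _ => (Finset.mul_sum _ _ _).symm)
      _ ≤ (1 + γ) ^ 2 + γ * ∑ k, P j k * ((l : ℝ) * (1 + γ) ^ 2) := by
          gcongr
          · exact colXXAX γ hγ0 hP j
          · exact hP.1 j _
          · exact ih _
      _ = (1 + γ) ^ 2 + γ * ((l : ℝ) * (1 + γ) ^ 2) := by
          rw [← Finset.sum_mul, hP.2 j, one_mul]
      _ ≤ ((l : ℝ) + 1) * (1 + γ) ^ 2 := by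
          have hl : (0:ℝ) ≤ (l:ℝ) := Nat.cast_nonneg l
          nlinarith [mul_nonneg (mul_nonneg (sub_nonneg.2 hγ1) hl) (sq_nonneg (1 + γ))]
      _ = (((l : ℕ) + 1 : ℕ) : ℝ) * (1 + γ) ^ 2 := by push_cast; ring

end aux13

/-- `‖h_l‖_1 ≤ ((l² + l)/2)(1+γ)² + l(1+γ)`. -/
theorem stmt13 (n : ℕ) (hn : 1 ≤ n) (γ : ℝ) (hγ0 : 0 ≤ γ) (hγ1 : γ < 1)
    (P : Matrix (Fin n) (Fin n) ℝ) (hP : RowStochastic P) (r : Fin n → ℝ)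
    (ω : Fin n) (l : ℕ) :
    ∑ i, |hseq γ P ω l i| ≤ (((l : ℝ) ^ 2 + l) / 2) * (1 + γ) ^ 2 + (l : ℝ) * (1 + γ) := by
  have hneg : ∑ i, |(-(Pi.single ω 1 : Fin n → ℝ)) i| = 1 := by
    simp [Pi.single_apply, apply_ite abs]
  have hterm2 : ∑ p : TwoN n, |(Xmat γ P * (Xmat γ P)ᵀ * Atd n).mulVec (xqv ω) p|
      ≤ 1 + γ := by
    have : (Xmat γ P * (Xmat γ P)ᵀ * Atd n).mulVec (xqv ω)
        = (Xmat γ P).mulVec (-(Pi.single ω 1 : Fin n → ℝ)) := by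
      rw [← XtAtd_xq γ (P := P) ω, Matrix.mulVec_mulVec, Matrix.mul_assoc]
    rw [this]
    have := mulVecX_l1 γ hγ0 hP (-(Pi.single ω 1 : Fin n → ℝ))
    rw [hneg, mul_one] at this
    exact this
  have hterm3 : ∀ l : ℕ, ∑ p : TwoN n, |(Useq γ P l * (Xmat γ P)ᵀ * Atd n).mulVec (xqv ω) p|
      ≤ (l : ℝ) * (1 + γ) ^ 2 := by
    intro l
    have h1 : (Useq γ P l * (Xmat γ P)ᵀ * Atd n).mulVec (xqv ω)
        = (Useq γ P l).mulVec (-(Pi.single ω 1 : Fin n → ℝ)) := by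
      rw [← XtAtd_xq γ (P := P) ω, Matrix.mulVec_mulVec, Matrix.mul_assoc]
    rw [h1]
    have h2 : ∀ p, |(Useq γ P l).mulVec (-(Pi.single ω 1 : Fin n → ℝ)) p|
        = |Useq γ P l p ω| := by
      intro p
      have : (Useq γ P l).mulVec (-(Pi.single ω 1 : Fin n → ℝ))
          = -((Useq γ P l).mulVec (Pi.single ω 1)) := by
        rw [Matrix.mulVec_neg]
      rw [this]
      simp [Matrix.mulVec_single]
    calc ∑ p : TwoN n, |(Useq γ P l).mulVec (-(Pi.single ω 1 : Fin n → ℝ)) p|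
        = ∑ p : TwoN n, |Useq γ P l p ω| := Finset.sum_congr rfl fun p _ => h2 p
      _ ≤ (l : ℝ) * (1 + γ) ^ 2 := colUseq γ hγ0 hγ1.le hP l ω
  induction l with
  | zero => simp [hseq]
  | succ l ih =>
    have hstep : ∑ i, |hseq γ P ω (l+1) i|
        ≤ (∑ i, |hseq γ P ω l i|) + (1 + γ) + (l : ℝ) * (1 + γ) ^ 2 := by
      calc ∑ i, |hseq γ P ω (l+1) i|
          ≤ ∑ i, (|hseq γ P ω l i|
              + |(Xmat γ P * (Xmat γ P)ᵀ * Atd n).mulVec (xqv ω) i|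
              + |(Useq γ P l * (Xmat γ P)ᵀ * Atd n).mulVec (xqv ω) i|) := by
            refine Finset.sum_le_sum fun i _ => ?_
            show |(hseq γ P ω l + _ + _ : TwoN n → ℝ) i| ≤ _
            calc |(hseq γ P ω l + _ + _ : TwoN n → ℝ) i| ≤ _ := abs_add_le _ _
              _ ≤ _ := by gcongr; exact abs_add_le _ _
        _ = (∑ i, |hseq γ P ω l i|)
              + (∑ i, |(Xmat γ P * (Xmat γ P)ᵀ * Atd n).mulVec (xqv ω) i|)
              + ∑ i, |(Useq γ P l * (Xmat γ P)ᵀ * Atd n).mulVec (xqv ω) i| := by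
            rw [Finset.sum_add_distrib, Finset.sum_add_distrib]
        _ ≤ (∑ i, |hseq γ P ω l i|) + (1 + γ) + (l : ℝ) * (1 + γ) ^ 2 :=
            add_le_add (add_le_add le_rfl hterm2) (hterm3 l)
    refine hstep.trans ?_
    have h1γ : (0:ℝ) ≤ (1 + γ) ^ 2 := sq_nonneg _
    push_cast
    nlinarith [ih]

end
end
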